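/- Let m be a positive integer and let J, K ⊆ {0,1,…,m−1} with |J| = |K| = 2. Then H_{J,K,m} is a Hadamard submatrix of the Fourier matrix F_m if and only if ν₂^min(P_m(J)\{1}) + ν₂^min(P_m(K)\{1}) = ν₂^max(P_m(J)\{1}) + ν₂^max(P_m(K)\{1}) = ν₂(m) + 1, and ν_p^max(P_m(J)\{1}) + ν_p^max(P_m(K)\{1}) ≤ ν_p(m) for all odd primes p. -/

import Mathlib

open Finset

/-- The difference set `D(X) = {x₁ - x₂ : x₁, x₂ ∈ X}` of a finite set of naturals. -/
def diffSet (X : Finset ℕ) : Finset ℤ :=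
  (X ×ˢ X).image fun q => (q.1 : ℤ) - (q.2 : ℤ)

/-- The `m`-th primitive set `P_m(X) = {m / gcd(m,d) : d ∈ D(X)}`. -/
def primSet (m : ℕ) (X : Finset ℕ) : Finset ℕ :=
  (diffSet X).image fun d => m / Nat.gcd m d.natAbs

/-- `H_{J,K,m}` is a Hadamard submatrix of the Fourier matrix `F_m`:
for all distinct `j₁ j₂ ∈ J`, `∑_{k ∈ K} e^{2πi(j₁-j₂)k/m} = 0`. -/
def IsHadamardSub (m : ℕ) (J K : Finset ℕ) : Prop :=
  ∀ j₁ ∈ J, ∀ j₂ ∈ J, j₁ ≠ j₂ →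
    ∑ k ∈ K, Complex.exp (2 * Real.pi * Complex.I * ((j₁ : ℂ) - (j₂ : ℂ)) * (k : ℂ) / (m : ℂ)) = 0

/-- `ν_p^max` of a finite set of naturals. -/
noncomputable def nuMaxN (p : ℕ) (S : Finset ℕ) : ℕ := S.sup fun n => padicValNat p n

/-- `ν_p^min` of a finite set of naturals (0 for the empty set). -/
noncomputable def nuMinN (p : ℕ) (S : Finset ℕ) : ℕ :=
  if h : S.Nonempty then S.inf' h fun n => padicValNat p n else 0

/-- `ν_p^max` of a finite set of integers. -/
noncomputable def nuMaxI (p : ℕ) (S : Finset ℤ) : ℕ := S.sup fun d => padicValInt p d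

/-- `ν_p^min` of a finite set of integers (0 for the empty set). -/
noncomputable def nuMinI (p : ℕ) (S : Finset ℤ) : ℕ :=
  if h : S.Nonempty then S.inf' h fun d => padicValInt p d else 0

/-- `C_m(X) = ∏_{s ∈ P_m(X) \ {1}} Φ_s(1)`. -/
noncomputable def Cm (m : ℕ) (X : Finset ℕ) : ℤ :=
  ∏ s ∈ (primSet m X).erase 1, (Polynomial.cyclotomic s ℤ).eval 1

/- ### Auxiliary lemmas -/

lemma exp_eq_neg_one_iff {z : ℂ} :
    Complex.exp z = -1 ↔ ∃ n : ℤ, z = (2 * n + 1) * Real.pi * Complex.I := by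
  rw [show (-1 : ℂ) = Complex.exp (Real.pi * Complex.I) from (Complex.exp_pi_mul_I).symm,
    Complex.exp_eq_exp_iff_exists_int]
  constructor
  · rintro ⟨n, rfl⟩; exact ⟨n, by ring⟩
  · rintro ⟨n, rfl⟩; exact ⟨n, by ring⟩

lemma sum_two_exp_iff (m : ℕ) (hm : 0 < m) (d : ℤ) (k₁ k₂ : ℕ) :
    Complex.exp (2 * Real.pi * Complex.I * (d : ℂ) * (k₁ : ℂ) / (m : ℂ))
      + Complex.exp (2 * Real.pi * Complex.I * (d : ℂ) * (k₂ : ℂ) / (m : ℂ)) = 0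
    ↔ ∃ n : ℤ, 2 * d * ((k₁ : ℤ) - (k₂ : ℤ)) = (2 * n + 1) * m := by
  have hm' : (m : ℂ) ≠ 0 := by exact_mod_cast hm.ne'
  have hB : Complex.exp (2 * Real.pi * Complex.I * (d : ℂ) * (k₂ : ℂ) / (m : ℂ)) ≠ 0 :=
    Complex.exp_ne_zero _
  rw [add_eq_zero_iff_eq_neg, neg_eq_neg_one_mul, ← div_eq_iff hB, ← Complex.exp_sub,
    exp_eq_neg_one_iff]
  have hπ : (Real.pi : ℂ) ≠ 0 := by exact_mod_cast Real.pi_ne_zero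
  constructor
  · rintro ⟨n, hn⟩
    refine ⟨n, ?_⟩
    have : (2 : ℂ) * d * ((k₁ : ℂ) - k₂) = (2 * n + 1) * m := by
      field_simp at hn
      have hπI : (Real.pi : ℂ) * Complex.I ≠ 0 := mul_ne_zero hπ Complex.I_ne_zero
      apply mul_left_cancel₀ hπI
      linear_combination Real.pi * Complex.I * hn
    exact_mod_cast this
  · rintro ⟨n, hn⟩
    refine ⟨n, ?_⟩
    have h2 : (2 : ℂ) * d * ((k₁ : ℂ) - k₂) = (2 * n + 1) * m := by exact_mod_cast hn
    field_simp
    linear_combination h2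

lemma diffSet_pair (a b : ℕ) :
    diffSet ({a, b} : Finset ℕ) = {0, (a : ℤ) - b, (b : ℤ) - a} := by
  ext x
  simp only [diffSet, Finset.mem_image, Finset.mem_product, Finset.mem_insert,
    Finset.mem_singleton, Prod.exists]
  constructor
  · rintro ⟨q1, q2, ⟨h1 | h1, h2 | h2⟩, rfl⟩ <;> subst h1 <;> subst h2 <;> simp
  · rintro (rfl | rfl | rfl)
    · exact ⟨a, a, ⟨Or.inl rfl, Or.inl rfl⟩, by ring⟩
    · exact ⟨a, b, ⟨Or.inl rfl, Or.inr rfl⟩, rfl⟩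
    · exact ⟨b, a, ⟨Or.inr rfl, Or.inl rfl⟩, rfl⟩

lemma primSet_pair {m a b : ℕ} (hab : a ≠ b) (ha : a < m) (hb : b < m) :
    (primSet m ({a, b} : Finset ℕ)).erase 1
      = {m / Nat.gcd m ((a : ℤ) - b).natAbs} := by
  have hm : 0 < m := lt_of_le_of_lt (Nat.zero_le a) ha
  set D := ((a : ℤ) - b).natAbs with hD
  have hD0 : D ≠ 0 := by simp only [hD, Int.natAbs_ne_zero]; omega
  have hDm : D < m := by simp only [hD]; omega
  have hgcd : Nat.gcd m D ∣ m := Nat.gcd_dvd_left _ _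
  have hgcdlt : Nat.gcd m D < m :=
    lt_of_le_of_lt (Nat.le_of_dvd (Nat.pos_of_ne_zero hD0) (Nat.gcd_dvd_right _ _)) hDm
  have hs1 : m / Nat.gcd m D ≠ 1 := by
    intro h
    have := Nat.div_mul_cancel hgcd
    rw [h, one_mul] at this
    omega
  have hba : ((b : ℤ) - a).natAbs = D := by omega
  have hprim : primSet m ({a, b} : Finset ℕ) = {1, m / Nat.gcd m D} := by
    rw [primSet, diffSet_pair]
    rw [Finset.image_insert, Finset.image_insert, Finset.image_singleton]
    simp [hba, Nat.div_self hm, ← hD]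
  rw [hprim]
  ext x
  simp only [Finset.mem_erase, Finset.mem_insert, Finset.mem_singleton]
  constructor
  · rintro ⟨hx1, rfl | rfl⟩
    · exact absurd rfl hx1
    · rfl
  · rintro rfl
    exact ⟨hs1, Or.inr rfl⟩

lemma int_exists_odd_iff (m : ℕ) (hm : m ≠ 0) (d e : ℤ) :
    (∃ n : ℤ, 2 * d * e = (2 * n + 1) * m) ↔
      (m ∣ 2 * d.natAbs * e.natAbs ∧ Odd (2 * d.natAbs * e.natAbs / m)) := by
  constructor
  · rintro ⟨n, hn⟩
    have habs : 2 * d.natAbs * e.natAbs = (2 * n + 1).natAbs * m := by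
      have := congrArg Int.natAbs hn
      simpa [Int.natAbs_mul] using this
    refine ⟨by rw [habs]; exact dvd_mul_left m _, ?_⟩
    rw [habs, Nat.mul_div_cancel _ (Nat.pos_of_ne_zero hm)]
    exact Int.natAbs_odd.mpr ⟨n, by ring⟩
  · rintro ⟨hdvd, hodd⟩
    obtain ⟨t, ht⟩ := hodd
    have hmc := Nat.div_mul_cancel hdvd
    rw [ht] at hmc
    have hq : 2 * d.natAbs * e.natAbs = (2 * t + 1) * m := hmc.symm
    have habs : ((2 * d * e).natAbs : ℤ) = ((2 * d.natAbs * e.natAbs : ℕ) : ℤ) := by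
      push_cast [Int.natAbs_mul]
      ring
    rcases Int.natAbs_eq (2 * d * e) with h | h
    · exact ⟨t, by rw [h, habs, hq]; push_cast; ring⟩
    · exact ⟨-t - 1, by rw [h, habs, hq]; push_cast; ring⟩

lemma nat_dvd_odd_iff (m D E : ℕ) (hm : m ≠ 0) (hD : D ≠ 0) (hE : E ≠ 0) :
    (m ∣ 2 * D * E ∧ Odd (2 * D * E / m)) ↔
      ((1 + D.factorization 2 + E.factorization 2 = m.factorization 2) ∧
       ∀ p : ℕ, p.Prime → p ≠ 2 →
         m.factorization p ≤ D.factorization p + E.factorization p) := by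
  have h2DE : 2 * D * E ≠ 0 := by positivity
  have hfact : ∀ p : ℕ, p.Prime →
      (2 * D * E).factorization p
        = (if p = 2 then 1 else 0) + D.factorization p + E.factorization p := by
    intro p hp
    rw [Nat.factorization_mul (by positivity) hE, Nat.factorization_mul two_ne_zero hD]
    simp only [Finsupp.coe_add, Pi.add_apply]
    congr 2
    rw [Nat.Prime.factorization Nat.prime_two, Finsupp.single_apply]
    simp [eq_comm]
  have hdvd_iff : m ∣ 2 * D * E ↔ ∀ p : ℕ, p.Prime →
      m.factorization p ≤ (if p = 2 then 1 else 0) + D.factorization p + E.factorization p := by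
    rw [← Nat.factorization_le_iff_dvd hm h2DE, Finsupp.le_def]
    constructor
    · intro h p hp; rw [← hfact p hp]; exact h p
    · intro h p
      by_cases hp : p.Prime
      · rw [hfact p hp]; exact h p hp
      · simp [Nat.factorization_eq_zero_of_not_prime _ hp]
  constructor
  · rintro ⟨hdvd, hodd⟩
    have ht0 : 2 * D * E / m ≠ 0 := Nat.div_ne_zero_iff_of_dvd hdvd |>.mpr ⟨h2DE, hm⟩
    have hodd2 : (2 * D * E / m).factorization 2 = 0 := by
      rw [Nat.odd_iff] at hodd
      have hno2 : ¬ (2 ∣ 2 * D * E / m) := by omega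
      rw [Nat.Prime.dvd_iff_one_le_factorization Nat.prime_two ht0] at hno2
      omega
    rw [Nat.factorization_div hdvd, Finsupp.tsub_apply, hfact 2 Nat.prime_two] at hodd2
    norm_num at hodd2
    have hle := (hdvd_iff.mp hdvd) 2 Nat.prime_two
    norm_num at hle
    refine ⟨by omega, fun p hp hp2 => ?_⟩
    have := (hdvd_iff.mp hdvd) p hp
    simp only [if_neg hp2] at this
    omega
  · rintro ⟨h2, hodd⟩
    have hdvd : m ∣ 2 * D * E := by
      rw [hdvd_iff]
      intro p hp
      by_cases hp2 : p = 2
      · subst hp2; norm_num; omega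
      · have := hodd p hp hp2; simp only [if_neg hp2]; omega
    refine ⟨hdvd, ?_⟩
    have ht0 : 2 * D * E / m ≠ 0 := Nat.div_ne_zero_iff_of_dvd hdvd |>.mpr ⟨h2DE, hm⟩
    have hf0 : (2 * D * E / m).factorization 2 = 0 := by
      rw [Nat.factorization_div hdvd, Finsupp.tsub_apply, hfact 2 Nat.prime_two]
      norm_num
      omega
    rw [Nat.odd_iff]
    have hno2 : ¬ (2 ∣ 2 * D * E / m) := by
      rw [Nat.Prime.dvd_iff_one_le_factorization Nat.prime_two ht0]
      omega
    omega

lemma val_quot {p : ℕ} (hp : p.Prime) {m D : ℕ} (hm : m ≠ 0) (hD : D ≠ 0) :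
    padicValNat p (m / Nat.gcd m D)
      = m.factorization p - min (m.factorization p) (D.factorization p) := by
  rw [← Nat.factorization_def _ hp, Nat.factorization_div (Nat.gcd_dvd_left m D),
    Finsupp.tsub_apply, Nat.factorization_gcd hm hD, Finsupp.inf_apply]

lemma nuMaxN_singleton (p s : ℕ) : nuMaxN p ({s} : Finset ℕ) = padicValNat p s := by
  simp [nuMaxN]

lemma nuMinN_singleton (p s : ℕ) : nuMinN p ({s} : Finset ℕ) = padicValNat p s := by
  simp [nuMinN]

theorem hadamard_two_by_two_iff (m : ℕ) (hm : 0 < m) (J K : Finset ℕ)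
    (hJ : J ⊆ Finset.range m) (hK : K ⊆ Finset.range m)
    (hJ2 : J.card = 2) (hK2 : K.card = 2) :
    IsHadamardSub m J K ↔
      (nuMinN 2 ((primSet m J).erase 1) + nuMinN 2 ((primSet m K).erase 1)
          = padicValNat 2 m + 1 ∧
       nuMaxN 2 ((primSet m J).erase 1) + nuMaxN 2 ((primSet m K).erase 1)
          = padicValNat 2 m + 1 ∧
       ∀ p : ℕ, p.Prime → p ≠ 2 →
         nuMaxN p ((primSet m J).erase 1) + nuMaxN p ((primSet m K).erase 1)
           ≤ padicValNat p m) := by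
  obtain ⟨j₁, j₂, hj, rfl⟩ := Finset.card_eq_two.mp hJ2
  obtain ⟨k₁, k₂, hk, rfl⟩ := Finset.card_eq_two.mp hK2
  have hj1m : j₁ < m := by simpa using hJ (Finset.mem_insert_self _ _)
  have hj2m : j₂ < m := by
    simpa using hJ (Finset.mem_insert_of_mem (Finset.mem_singleton_self _))
  have hk1m : k₁ < m := by simpa using hK (Finset.mem_insert_self _ _)
  have hk2m : k₂ < m := by
    simpa using hK (Finset.mem_insert_of_mem (Finset.mem_singleton_self _))
  set d : ℤ := (j₁ : ℤ) - j₂ with hd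
  set e : ℤ := (k₁ : ℤ) - k₂ with he
  have hD0 : d.natAbs ≠ 0 := by simp only [hd, Int.natAbs_ne_zero]; omega
  have hE0 : e.natAbs ≠ 0 := by simp only [he, Int.natAbs_ne_zero]; omega
  -- Step A: reduce Hadamard condition to an integer equation
  have hc : ((j₁ : ℂ) - (j₂ : ℂ)) = ((d : ℤ) : ℂ) := by rw [hd]; push_cast; ring
  have hc' : ((j₂ : ℂ) - (j₁ : ℂ)) = (((-d) : ℤ) : ℂ) := by rw [hd]; push_cast; ring
  have hneg : (∃ n : ℤ, 2 * (-d) * e = (2 * n + 1) * m) ↔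
      (∃ n : ℤ, 2 * d * e = (2 * n + 1) * m) := by
    constructor
    · rintro ⟨n, hn⟩; exact ⟨-n - 1, by linear_combination -hn⟩
    · rintro ⟨n, hn⟩; exact ⟨-n - 1, by linear_combination -hn⟩
  have hHad : IsHadamardSub m {j₁, j₂} {k₁, k₂} ↔
      ∃ n : ℤ, 2 * d * e = (2 * n + 1) * m := by
    constructor
    · intro h
      have h1 := h j₁ (Finset.mem_insert_self _ _)
        j₂ (Finset.mem_insert_of_mem (Finset.mem_singleton_self _)) hj
      rw [Finset.sum_pair hk] at h1
      rw [hc] at h1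
      exact (sum_two_exp_iff m hm d k₁ k₂).mp h1
    · intro h x hx y hy hxy
      rw [Finset.sum_pair hk]
      simp only [Finset.mem_insert, Finset.mem_singleton] at hx hy
      rcases hx with rfl | rfl <;> rcases hy with rfl | rfl
      · exact absurd rfl hxy
      · rw [hc]; exact (sum_two_exp_iff m hm d k₁ k₂).mpr h
      · rw [hc']; exact (sum_two_exp_iff m hm (-d) k₁ k₂).mpr (hneg.mpr h)
      · exact absurd rfl hxy
  rw [hHad, int_exists_odd_iff m hm.ne' d e,
    nat_dvd_odd_iff m d.natAbs e.natAbs hm.ne' hD0 hE0]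
  -- Step B: rewrite the nu quantities
  have hJset := primSet_pair hj hj1m hj2m
  have hKset := primSet_pair hk hk1m hk2m
  have hJval : ∀ p : ℕ, p.Prime →
      padicValNat p (m / Nat.gcd m d.natAbs)
        = m.factorization p - min (m.factorization p) (d.natAbs.factorization p) :=
    fun p hp => val_quot hp hm.ne' hD0
  have hKval : ∀ p : ℕ, p.Prime →
      padicValNat p (m / Nat.gcd m e.natAbs)
        = m.factorization p - min (m.factorization p) (e.natAbs.factorization p) :=
    fun p hp => val_quot hp hm.ne' hE0
  rw [hJset, hKset]
  constructor
  · rintro ⟨h2, hps⟩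
    have hmin2 : min (m.factorization 2) (d.natAbs.factorization 2)
        = d.natAbs.factorization 2 := by omega
    refine ⟨?_, ?_, ?_⟩
    · rw [nuMinN_singleton, nuMinN_singleton, hJval 2 Nat.prime_two,
        hKval 2 Nat.prime_two, ← Nat.factorization_def m Nat.prime_two]
      omega
    · rw [nuMaxN_singleton, nuMaxN_singleton, hJval 2 Nat.prime_two,
        hKval 2 Nat.prime_two, ← Nat.factorization_def m Nat.prime_two]
      omega
    · intro p hp hp2
      rw [nuMaxN_singleton, nuMaxN_singleton, hJval p hp, hKval p hp,
        ← Nat.factorization_def m hp]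
      have := hps p hp hp2
      omega
  · rintro ⟨h2, -, hps⟩
    rw [nuMinN_singleton, nuMinN_singleton, hJval 2 Nat.prime_two,
      hKval 2 Nat.prime_two, ← Nat.factorization_def m Nat.prime_two] at h2
    refine ⟨by omega, fun p hp hp2 => ?_⟩
    have := hps p hp hp2
    rw [nuMaxN_singleton, nuMaxN_singleton, hJval p hp, hKval p hp,
      ← Nat.factorization_def m hp] at this
    omega
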